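/- Let A = ⊕_{i≥0} A^i be a graded Z_2-algebra with A^0 ≅ Z_2, equipped with operations Sq^j : A^i → A^{i+j} satisfying the Cartan formula Sq^n(uv) = ∑_{h=0}^n Sq^h(u) Sq^{n−h}(v), Sq^0 = id, and Sq^n(u) = u^2 when n = deg(u). Suppose x ∈ A^k induces periodicity with k minimal, and Sq^i(x) = 0 for all 0 < i < k with i ≠ j₀ for some fixed j₀. If in addition x^2 = Sq^m(y) for some homogeneous y with deg(y) ∉ {k, 2k}, derive that x^2 decomposes in a way contradicting minimality of k. -/
import Mathlib


/-- `x` is a nonzero homogeneous element of degree `k` such that multiplication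
by `x` gives an isomorphism `A^i → A^{i+k}` for all `i ≥ 0`. -/
def InducesPeriodicity {A : Type*} [CommRing A] (𝒜 : ℕ → AddSubgroup A)
    (k : ℕ) (x : A) : Prop :=
  x ≠ 0 ∧ x ∈ 𝒜 k ∧
    (∀ i : ℕ, ∀ a ∈ 𝒜 i, x * a = 0 → a = 0) ∧
    (∀ i : ℕ, ∀ b ∈ 𝒜 (i + k), ∃ a ∈ 𝒜 i, x * a = b)

/-- If the minimal periodicity class `x` is a product of two homogeneous
elements of positive degree, we get a contradiction: the first factor would
itself induce periodicity in a smaller degree. -/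
lemma decomp_contra {A : Type*} [CommRing A] (𝒜 : ℕ → AddSubgroup A) [GradedRing 𝒜]
    (k : ℕ) (x : A) (hx : InducesPeriodicity 𝒜 k x)
    (hmin : ∀ k' : ℕ, ∀ x' : A, 0 < k' → InducesPeriodicity 𝒜 k' x' → k ≤ k')
    (a b : ℕ) (z u : A) (hz : z ∈ 𝒜 a) (hu : u ∈ 𝒜 b) (hab : a + b = k)
    (ha : 0 < a) (hb : 0 < b) (hzu : x = z * u) : False := by
  have hx0 := hx.1
  have hinj := hx.2.2.1
  have hsurj := hx.2.2.2
  have hzper : InducesPeriodicity 𝒜 a z := by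
    refine ⟨?_, hz, ?_, ?_⟩
    · rintro rfl
      exact hx0 (by rw [hzu, zero_mul])
    · intro i c hc hzc
      refine hinj i c hc ?_
      rw [hzu, mul_comm z u, mul_assoc, hzc, mul_zero]
    · intro i b' hb'
      have hub' : u * b' ∈ 𝒜 (i + k) := by
        have := SetLike.mul_mem_graded hu hb'
        rwa [show b + (i + a) = i + k by omega] at this
      obtain ⟨c, hc, hxc⟩ := hsurj i (u * b') hub'
      have huinj : ∀ e ∈ 𝒜 (i + a), u * e = 0 → e = 0 := by
        intro e he hue
        refine hinj (i + a) e he ?_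
        rw [hzu, show z * u * e = z * (u * e) by ring, hue, mul_zero]
      have h1 : u * (z * c - b') = 0 := by
        rw [mul_sub, show u * (z * c) = x * c by rw [hzu]; ring, hxc, sub_self]
      have h2 : z * c - b' ∈ 𝒜 (i + a) := by
        refine sub_mem ?_ hb'
        have := SetLike.mul_mem_graded hz hc
        rwa [show a + i = i + a by omega] at this
      have h3 := huinj _ h2 h1
      exact ⟨c, hc, (sub_eq_zero.mp h3)⟩
  have := hmin a z ha hzper
  omega

/-- Cartan formula squared: `Sq^{2m}(u²) = (Sq^m u)²` in characteristic 2. -/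
lemma cartan_sq {A : Type*} [CommRing A] (h2 : ∀ u : A, u + u = 0)
    (Sq : ℕ → A → A)
    (hCartan : ∀ (n : ℕ) (u v : A),
      Sq n (u * v) = ∑ h ∈ Finset.range (n + 1), Sq h u * Sq (n - h) v)
    (m : ℕ) (u : A) : Sq (m + m) (u * u) = Sq m u * Sq m u := by
  rw [hCartan]
  have hmem : m ∈ Finset.range (m + m + 1) := Finset.mem_range.mpr (by omega)
  rw [← Finset.add_sum_erase _ (fun h => Sq h u * Sq (m + m - h) u) hmem]
  have h1 : m + m - m = m := by omega
  rw [h1]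
  have hzero : ∑ h ∈ (Finset.range (m + m + 1)).erase m, Sq h u * Sq (m + m - h) u = 0 := by
    refine Finset.sum_involution (fun a _ => m + m - a) ?_ ?_ ?_ ?_
    · intro a ha
      have ha' : a ≤ m + m ∧ a ≠ m := by
        simp only [Finset.mem_erase, Finset.mem_range] at ha
        omega
      rw [show m + m - (m + m - a) = a by omega, mul_comm]
      exact h2 _
    · intro a ha _
      have ha' : a ≤ m + m ∧ a ≠ m := by
        simp only [Finset.mem_erase, Finset.mem_range] at ha
        omega
      show m + m - a ≠ a
      omega
    · intro a ha
      simp only [Finset.mem_erase, Finset.mem_range] at ha ⊢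
      omega
    · intro a ha
      have ha' : a ≤ m + m ∧ a ≠ m := by
        simp only [Finset.mem_erase, Finset.mem_range] at ha
        omega
      show m + m - (m + m - a) = a
      omega
  rw [hzero, add_zero]

/-- The main inductive argument, with the degree of `y` generalized. -/
lemma stmt11_aux {A : Type*} [CommRing A] (h2 : ∀ u : A, u + u = 0)
    (𝒜 : ℕ → AddSubgroup A) [GradedRing 𝒜]
    (h0 : ∀ u ∈ 𝒜 0, u = 0 ∨ u = 1)
    (Sq : ℕ → A → A)
    (hSq_mem : ∀ (i j : ℕ) (u : A), u ∈ 𝒜 i → Sq j u ∈ 𝒜 (i + j))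
    (hSq_zero' : ∀ (i j : ℕ) (u : A), u ∈ 𝒜 i → i < j → Sq j u = 0)
    (hSq_sq : ∀ (i : ℕ) (u : A), u ∈ 𝒜 i → Sq i u = u ^ 2)
    (hSq0 : ∀ u : A, Sq 0 u = u)
    (hCartan : ∀ (n : ℕ) (u v : A),
      Sq n (u * v) = ∑ h ∈ Finset.range (n + 1), Sq h u * Sq (n - h) v)
    (k : ℕ) (hk : 0 < k) (x : A) (hx : InducesPeriodicity 𝒜 k x)
    (hmin : ∀ k' : ℕ, ∀ x' : A, 0 < k' → InducesPeriodicity 𝒜 k' x' → k ≤ k')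
    (j₀ : ℕ)
    (hvan : ∀ i : ℕ, 0 < i → i < k → i ≠ j₀ → Sq i x = 0) :
    ∀ d : ℕ, ∀ (y : A) (m : ℕ), y ∈ 𝒜 d → d + m = 2 * k → d ≠ k → d ≠ 2 * k →
      x ^ 2 = Sq m y → False := by
  have hx0 := hx.1
  have hxk := hx.2.1
  have hinj := hx.2.2.1
  have hsurj := hx.2.2.2
  intro d
  induction d using Nat.strong_induction_on with
  | _ d IH =>
  intro y m hy hdm hd1 hd2 hxy
  have hx2 : x ^ 2 ≠ 0 := by
    intro h
    exact hx0 (hinj k x hxk (by rw [← pow_two]; exact h))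
  by_cases hdk : d < k
  · exact hx2 (by rw [hxy, hSq_zero' d m y hy (by omega)])
  have hdlt : d < 2 * k := by omega
  have hdgt : k < d := by omega
  have hm1 : 0 < m := by omega
  have hmk : m < k := by omega
  set e := d - k with he
  have hye : y ∈ 𝒜 (e + k) := by rwa [show e + k = d by omega]
  obtain ⟨y', hy', hyx⟩ := hsurj e y hye
  have hy'k : Sq m y' ∈ 𝒜 k := by
    have := hSq_mem e m y' hy'
    rwa [show e + m = k by omega] at this
  have hcancel : ∀ S, S ∈ 𝒜 k → x ^ 2 = x * S → x = S := by
    intro S hS hEq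
    have h1 : x * (x - S) = 0 := by rw [mul_sub, ← pow_two, hEq, sub_self]
    exact sub_eq_zero.mp (hinj k (x - S) (sub_mem hxk hS) h1)
  have hsum : x ^ 2 = ∑ h ∈ Finset.range (m + 1), Sq h x * Sq (m - h) y' := by
    rw [hxy, ← hyx, hCartan]
  have hmain : x = Sq m y' := by
    by_cases hj : 0 < j₀ ∧ j₀ ≤ m
    · have h0m : (0 : ℕ) ∈ Finset.range (m + 1) := Finset.mem_range.mpr (by omega)
      have hsplit : ∑ h ∈ Finset.range (m + 1), Sq h x * Sq (m - h) y'
          = Sq 0 x * Sq (m - 0) y'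
            + ∑ h ∈ (Finset.range (m + 1)).erase 0, Sq h x * Sq (m - h) y' :=
        (Finset.add_sum_erase _ (fun h => Sq h x * Sq (m - h) y') h0m).symm
      have herase : ∑ h ∈ (Finset.range (m + 1)).erase 0, Sq h x * Sq (m - h) y'
          = Sq j₀ x * Sq (m - j₀) y' := by
        refine Finset.sum_eq_single_of_mem j₀ ?_ ?_
        · simp only [Finset.mem_erase, Finset.mem_range]
          omega
        · intro h hh hne
          simp only [Finset.mem_erase, Finset.mem_range] at hh
          rw [hvan h (by omega) (by omega) hne, zero_mul]
      have hSqj : Sq j₀ x ∈ 𝒜 (j₀ + k) := by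
        have := hSq_mem k j₀ x hxk
        rwa [show k + j₀ = j₀ + k by omega] at this
      obtain ⟨w, hw, hwx⟩ := hsurj j₀ (Sq j₀ x) hSqj
      have hv : Sq (m - j₀) y' ∈ 𝒜 (k - j₀) := by
        have := hSq_mem e (m - j₀) y' hy'
        rwa [show e + (m - j₀) = k - j₀ by omega] at this
      have heq : x ^ 2 = x * (Sq m y' + w * Sq (m - j₀) y') := by
        rw [hsum, hsplit, herase, hSq0, Nat.sub_zero, ← hwx]
        ring
      have hwv : w * Sq (m - j₀) y' ∈ 𝒜 (0 + k) := by
        have := SetLike.mul_mem_graded hw hv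
        rwa [show j₀ + (k - j₀) = 0 + k by omega] at this
      obtain ⟨a, ha, hax⟩ := hsurj 0 _ hwv
      rcases h0 a ha with ha0 | ha1
      · have hzero : w * Sq (m - j₀) y' = 0 := by rw [← hax, ha0, mul_zero]
        have hS : Sq m y' + w * Sq (m - j₀) y' ∈ 𝒜 k :=
          add_mem hy'k (by rwa [zero_add] at hwv)
        have := hcancel _ hS heq
        rwa [hzero, add_zero] at this
      · have hxwv : x = w * Sq (m - j₀) y' := by rw [← hax, ha1, mul_one]
        exact absurd hxwv (fun hxwv =>
          decomp_contra 𝒜 k x hx hmin j₀ (k - j₀) w (Sq (m - j₀) y') hw hv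
            (by omega) (by omega) (by omega) hxwv)
    · have hsingle : ∑ h ∈ Finset.range (m + 1), Sq h x * Sq (m - h) y'
          = Sq 0 x * Sq (m - 0) y' := by
        refine Finset.sum_eq_single_of_mem 0 (Finset.mem_range.mpr (by omega)) ?_
        intro h hh hne
        have hh' : h ≤ m := by
          simp only [Finset.mem_range] at hh
          omega
        rw [hvan h (Nat.pos_of_ne_zero hne) (by omega) (by omega), zero_mul]
      refine hcancel _ hy'k ?_
      rw [hsum, hsingle, hSq0, Nat.sub_zero]
  have he1 : 0 < e := by omega
  rcases lt_trichotomy m e with hme | hme | hme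
  · have hDD : Sq (m + m) (y' * y') = Sq m y' * Sq m y' := cartan_sq h2 Sq hCartan m y'
    have hyy : y' * y' ∈ 𝒜 (e + e) := SetLike.mul_mem_graded hy' hy'
    exact IH (e + e) (by omega) (y' * y') (m + m) hyy (by omega) (by omega) (by omega)
      (by rw [hDD, ← hmain, pow_two])
  · rw [hme] at hmain
    rw [hSq_sq e y' hy', pow_two] at hmain
    exact decomp_contra 𝒜 k x hx hmin e e y' y' hy' hy' (by omega) (by omega) (by omega) hmain
  · have hz : Sq m y' = 0 := hSq_zero' e m y' hy' hme
    exact hx0 (by rw [hmain, hz])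

/-- Let `A = ⊕ A^i` be a graded `Z₂`-algebra with `A^0 ≅ Z₂`,
equipped with operations `Sq^j : A^i → A^{i+j}` satisfying the Cartan formula,
`Sq^0 = id`, and `Sq^n(u) = u²` when `n = deg u`. Suppose `x ∈ A^k` induces
periodicity with `k` minimal and `Sq^i(x) = 0` for all `0 < i < k` with
`i ≠ j₀`. If in addition `x² = Sq^m(y)` for a homogeneous `y` of degree
`∉ {k, 2k}`, then a contradiction follows. -/
theorem stmt11 {A : Type*} [CommRing A] (h2 : ∀ u : A, u + u = 0)
    (𝒜 : ℕ → AddSubgroup A) [GradedRing 𝒜]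
    (h0 : ∀ u ∈ 𝒜 0, u = 0 ∨ u = 1)
    (Sq : ℕ → A → A)
    (hSq_mem : ∀ (i j : ℕ) (u : A), u ∈ 𝒜 i → Sq j u ∈ 𝒜 (i + j))
    (hSq_add : ∀ (j : ℕ) (u v : A), Sq j (u + v) = Sq j u + Sq j v)
    (hSq_zero' : ∀ (i j : ℕ) (u : A), u ∈ 𝒜 i → i < j → Sq j u = 0)
    (hSq_sq : ∀ (i : ℕ) (u : A), u ∈ 𝒜 i → Sq i u = u ^ 2)
    (hSq0 : ∀ u : A, Sq 0 u = u)
    (hCartan : ∀ (n : ℕ) (u v : A),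
      Sq n (u * v) = ∑ h ∈ Finset.range (n + 1), Sq h u * Sq (n - h) v)
    (k : ℕ) (hk : 0 < k) (x : A) (hx : InducesPeriodicity 𝒜 k x)
    (hmin : ∀ k' : ℕ, ∀ x' : A, 0 < k' → InducesPeriodicity 𝒜 k' x' → k ≤ k')
    (j₀ : ℕ)
    (hvan : ∀ i : ℕ, 0 < i → i < k → i ≠ j₀ → Sq i x = 0)
    (y : A) (d m : ℕ) (hy : y ∈ 𝒜 d) (hdm : d + m = 2 * k)
    (hd1 : d ≠ k) (hd2 : d ≠ 2 * k)
    (hxy : x ^ 2 = Sq m y) :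
    False :=
  stmt11_aux h2 𝒜 h0 Sq hSq_mem hSq_zero' hSq_sq hSq0 hCartan k hk x hx hmin j₀ hvan
    d y m hy hdm hd1 hd2 hxy
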